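/- If a labeled graph G on [n] is 12-representable by a 121-avoiding word, then G is 12-representable by a permutation of [n]. -/

import Mathlib

/-- Every occurrence of `j` precedes every occurrence of `i` in the word `w`. -/
def EveryBefore (w : List ℕ) (j i : ℕ) : Prop :=
  ∀ p q : Fin w.length, w.get p = j → w.get q = i → p < q

/-- The word `w` 12-represents the graph `G` on the vertex set `{1, …, n}`:
`w` uses only letters from `{1, …, n}`, contains each of them at least once, and
for `i < j` in `{1, …, n}`, `i` and `j` are adjacent iff every `j` occurs before every `i`. -/
def Represents12 (n : ℕ) (G : SimpleGraph ℕ) (w : List ℕ) : Prop :=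
  (∀ x ∈ w, 1 ≤ x ∧ x ≤ n) ∧
  (∀ i, 1 ≤ i → i ≤ n → i ∈ w) ∧
  (∀ i j, 1 ≤ i → i < j → j ≤ n → (G.Adj i j ↔ EveryBefore w j i))

/-- `w` is a permutation of `{1, …, n}`, i.e. each letter occurs exactly once. -/
def IsPermWord (n : ℕ) (w : List ℕ) : Prop :=
  w.Perm (List.range' 1 n)

/-- `w` avoids the pattern 121: no subsequence x, y, x with x < y. -/
def Avoids121 (w : List ℕ) : Prop :=
  ¬ ∃ p q r : Fin w.length, p < q ∧ q < r ∧ w.get p = w.get r ∧ w.get p < w.get q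

lemma everyBefore_iff (w : List ℕ) (j i : ℕ) :
    EveryBefore w j i ↔ ∀ a b (_ : a < w.length) (_ : b < w.length),
      w[a] = j → w[b] = i → a < b := by
  constructor
  · intro H a b ha hb hja hib
    exact H ⟨a, ha⟩ ⟨b, hb⟩ (by simpa using hja) (by simpa using hib)
  · intro H p q hj hi
    exact H p q p.isLt q.isLt (by simpa using hj) (by simpa using hi)

lemma avoids121_iff (w : List ℕ) :
    Avoids121 w ↔ ¬ ∃ a b c, ∃ (_ : a < w.length) (_ : b < w.length) (_ : c < w.length),
      a < b ∧ b < c ∧ w[a] = w[c] ∧ w[a] < w[b] := by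
  unfold Avoids121
  constructor
  · intro H ⟨a, b, c, ha, hb, hc, h1, h2, h3, h4⟩
    exact H ⟨⟨a, ha⟩, ⟨b, hb⟩, ⟨c, hc⟩, h1, h2, by simpa using h3, by simpa using h4⟩
  · intro H ⟨p, q, r, h1, h2, h3, h4⟩
    exact H ⟨p, q, r, p.isLt, q.isLt, r.isLt, h1, h2, by simpa using h3, by simpa using h4⟩

theorem stmt_4 (n : ℕ) (G : SimpleGraph ℕ)
    (h : ∃ w, Avoids121 w ∧ Represents12 n G w) :
    ∃ π, IsPermWord n π ∧ Represents12 n G π := by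
  obtain ⟨w0, hav0, hrep0⟩ := h
  suffices H : ∀ N (w : List ℕ), w.length ≤ N → Avoids121 w → Represents12 n G w →
      ∃ π, IsPermWord n π ∧ Represents12 n G π from
    H w0.length w0 le_rfl hav0 hrep0
  -- a word that is Nodup and represents G is a permutation word
  have nodup_case : ∀ w : List ℕ, w.Nodup → Represents12 n G w → IsPermWord n w := by
    intro w hnd hrep
    rw [IsPermWord, List.perm_ext_iff_of_nodup hnd (List.nodup_range' (s := 1) (n := n))]
    intro a
    constructor
    · intro ha
      have := hrep.1 a ha
      rw [List.mem_range'_1]; omega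
    · intro ha
      rw [List.mem_range'_1] at ha
      exact hrep.2.1 a ha.1 (by omega)
  intro N
  induction N with
  | zero =>
    intro w hlen hav hrep
    exact ⟨w, nodup_case w (by
      interval_cases h : w.length <;> simp_all [List.length_eq_zero_iff]) hrep, hrep⟩
  | succ N ih =>
    intro w hlen hav hrep
    by_cases hnd : w.Nodup
    · exact ⟨w, nodup_case w hnd hrep, hrep⟩
    -- extract a repeated letter: positions p < q with the same value
    rw [List.nodup_iff_getElem?_ne_getElem?] at hnd
    push_neg at hnd
    obtain ⟨p, q, hpq, hq, heq'⟩ := hnd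
    have hp : p < w.length := lt_trans hpq hq
    have heq : w[p] = w[q] := by
      rw [List.getElem?_eq_getElem hp, List.getElem?_eq_getElem hq] at heq'
      exact Option.some_injective _ heq'
    set w' := w.eraseIdx p with hw'
    have hlen' : w'.length = w.length - 1 := by
      rw [hw', List.length_eraseIdx]; simp [hp]
    -- forward index map
    have hF : ∀ k, k < w'.length → (if k < p then k else k + 1) < w.length := by
      intro k hk; split <;> omega
    have hFval : ∀ k (hk : k < w'.length), w'[k] = w[if k < p then k else k + 1]'(hF k hk) := by
      intro k hk
      have : (w.eraseIdx p)[k]'(by rw [← hw']; exact hk) = _ := List.getElem_eraseIdx (l := w) (i := p) (j := k) _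
      rw [show w'[k] = (w.eraseIdx p)[k]'(by rw [← hw']; exact hk) from rfl, this]
      split <;> simp
    -- w' avoids 121
    have hav' : Avoids121 w' := by
      rw [avoids121_iff]
      rintro ⟨a, b, c, ha, hb, hc, h1, h2, h3, h4⟩
      rw [avoids121_iff] at hav
      refine hav ⟨_, _, _, hF a ha, hF b hb, hF c hc, ?_, ?_, ?_, ?_⟩
      · split <;> split <;> omega
      · split <;> split <;> omega
      · rw [← hFval a ha, ← hFval c hc]; exact h3
      · rw [← hFval a ha, ← hFval b hb]; exact h4
    -- backward index map (for indices ≠ p)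
    have hG : ∀ r, r < w.length → r ≠ p → (if r < p then r else r - 1) < w'.length := by
      intro r hr hrp; rw [hlen']; split <;> omega
    have hGval : ∀ r (hr : r < w.length) (hrp : r ≠ p),
        w'[if r < p then r else r - 1]'(hG r hr hrp) = w[r] := by
      intro r hr hrp
      rw [hFval _ (hG r hr hrp)]
      congr 1
      split <;> first | omega | (split <;> omega)
    -- w' represents G
    have hsub : List.Sublist w' w := List.eraseIdx_sublist w p
    have hrep' : Represents12 n G w' := by
      refine ⟨fun x hx => hrep.1 x (hsub.subset hx), ?_, ?_⟩
      · intro i h1i hin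
        obtain ⟨r, hr, hri⟩ := List.mem_iff_getElem.mp (hrep.2.1 i h1i hin)
        rcases eq_or_ne r p with hrp' | hrp
        · have hqi : w[q] = i := by subst hrp'; rw [← heq]; exact hri
          have hqp : q ≠ p := by omega
          rw [List.mem_iff_getElem]
          exact ⟨_, hG q hq hqp, by rw [hGval q hq hqp]; exact hqi⟩
        · rw [List.mem_iff_getElem]
          exact ⟨_, hG r hr hrp, by rw [hGval r hr hrp, hri]⟩
      · intro i j h1i hij hjn
        rw [hrep.2.2 i j h1i hij hjn]
        rw [everyBefore_iff, everyBefore_iff]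
        constructor
        · -- EveryBefore w → EveryBefore w'
          intro H a b ha hb hja hib
          have h1 := H _ _ (hF a ha) (hF b hb) (by rw [← hFval a ha]; exact hja)
            (by rw [← hFval b hb]; exact hib)
          by_contra hcon
          revert h1; split <;> split <;> omega
        · -- EveryBefore w' → EveryBefore w
          intro H a b ha hb hja hib
          have hab : w[a] ≠ w[b] := by rw [hja, hib]; omega
          have refl_lt : ∀ r s (hr : r < w.length) (hs : s < w.length), r ≠ p → s ≠ p →
              w[r] = j → w[s] = i → r < s := by
            intro r s hr hs hrp hsp hrj hsi
            have := H _ _ (hG r hr hrp) (hG s hs hsp)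
              (by rw [hGval r hr hrp]; exact hrj) (by rw [hGval s hs hsp]; exact hsi)
            revert this; split <;> split <;> omega
          rcases eq_or_ne a p with rfl | hap
          · -- removed letter is j; use the copy at q
            have hbp : b ≠ a := by intro hb'; subst hb'; exact hab rfl
            have hqj : w[q] = j := by rw [← heq]; exact hja
            have : q < b := refl_lt q b hq hb (by omega) hbp hqj hib
            omega
          · rcases eq_or_ne b p with rfl | hbp
            · -- removed letter is i; use the copy at q and 121-avoidance
              have hqi : w[q] = i := by rw [← heq]; exact hib
              by_contra hcon
              push_neg at hcon
              have hne : b ≠ a := by intro h'; subst h'; exact hab rfl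
              have hba : b < a := lt_of_le_of_ne hcon hne
              rcases lt_or_ge a q with haq | hqa
              · -- pattern 121 at b < a < q
                rw [avoids121_iff] at hav
                exact hav ⟨b, a, q, hb, ha, hq, hba, haq, by rw [hib, hqi],
                  by rw [hib, hja]; exact hij⟩
              · have hne2 : q ≠ a := by
                  intro h'; subst h'; rw [hja] at hqi; omega
                have haq : q < a := lt_of_le_of_ne hqa hne2
                have := refl_lt a q ha hq hap (by omega) hja hqi
                omega
            · exact refl_lt a b ha hb hap hbp hja hib
    exact ih w' (by omega) hav' hrep'
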